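/- arXiv:1812.10669 — 2 statements merged into one kernel-verified Lean document; each statement's English description precedes it below -/
import Mathlib

section
/- Assume the Continuum Hypothesis (𝔠 = ℵ₁). Then there exists a maximal almost disjoint family F of infinite subsets of ℕ with the following property: for every real matrix (λ_{i,j})_{i,j∈ℕ} satisfying (i) for every j, λ_{i,j} → 0 as i → ∞; (ii) for every i, Σ_j |λ_{i,j}| < ∞; and (iii) Σ_j λ_{i,j} → 1 as i → ∞, there exists N ∈ F such that the sequence (Σ_{j ∈ N} λ_{i,j})_{i∈ℕ} does not converge to 0. -/
open Filter Topology Set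

noncomputable def sS (f : ℕ → ℝ) (A : Set ℕ) : ℝ := ∑' j, A.indicator f j

section basic
variable {f : ℕ → ℝ} {A B : Set ℕ}

lemma sS_summable (hf : Summable f) (A : Set ℕ) : Summable (A.indicator f) := hf.indicator A

lemma sS_union (hf : Summable f) (h : Disjoint A B) : sS f (A ∪ B) = sS f A + sS f B := by
  unfold sS
  rw [Set.indicator_union_of_disjoint h]
  exact Summable.tsum_add (sS_summable hf A) (sS_summable hf B)

lemma sS_inter_add_diff (hf : Summable f) (A B : Set ℕ) :
    sS f B = sS f (B ∩ A) + sS f (B \ A) := by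
  rw [← sS_union hf (disjoint_sdiff_self_right.mono_left inter_subset_right), Set.inter_union_diff]

lemma sS_finset (f : ℕ → ℝ) (B : Finset ℕ) : sS f ↑B = ∑ j ∈ B, f j := by
  unfold sS
  rw [tsum_eq_sum (s := B) (fun b hb => Set.indicator_of_notMem (by simpa using hb) f)]
  exact Finset.sum_congr rfl fun j hj => Set.indicator_of_mem (by simpa using hj) f

lemma sS_empty (f : ℕ → ℝ) : sS f (∅ : Set ℕ) = 0 := by unfold sS; simp

lemma sS_univ (f : ℕ → ℝ) : sS f univ = ∑' j, f j := by unfold sS; simp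

lemma sS_finite (f : ℕ → ℝ) (hA : A.Finite) : sS f A = ∑ j ∈ hA.toFinset, f j := by
  rw [← sS_finset f hA.toFinset, hA.coe_toFinset]

lemma sS_Iio (f : ℕ → ℝ) (c : ℕ) : sS f (Set.Iio c) = ∑ j ∈ Finset.range c, f j := by
  rw [← Finset.coe_range, sS_finset]

lemma abs_sS_le {g : ℕ → ℝ} (hg : Summable fun j => |g j|) {W A : Set ℕ} (hWA : W ⊆ A) :
    |sS g W| ≤ sS (fun j => |g j|) A := by
  have habs : ∀ (V : Set ℕ) j, |V.indicator g j| = V.indicator (fun j => |g j|) j := by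
    intro V j; by_cases h : j ∈ V <;> simp [h]
  have h1 : |sS g W| ≤ ∑' j, |W.indicator g j| := by
    refine norm_tsum_le_tsum_norm (f := W.indicator g) ?_
    simp only [Real.norm_eq_abs, habs]
    exact hg.indicator W
  refine h1.trans ?_
  calc ∑' j, |W.indicator g j| = ∑' j, W.indicator (fun j => |g j|) j := by
        simp only [habs]
    _ ≤ sS (fun j => |g j|) A := by
        refine Summable.tsum_le_tsum (fun j => Set.indicator_le_indicator_apply_of_subset hWA (abs_nonneg _))
          (hg.indicator W) (hg.indicator A)

lemma sS_nonneg {g : ℕ → ℝ} (hg : ∀ j, 0 ≤ g j) (A : Set ℕ) : 0 ≤ sS g A :=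
  tsum_nonneg fun j => Set.indicator_apply_nonneg fun _ => hg j

lemma sS_mono_abs {g : ℕ → ℝ} (hg : Summable fun j => |g j|) {A B : Set ℕ} (h : A ⊆ B) :
    sS (fun j => |g j|) A ≤ sS (fun j => |g j|) B :=
  Summable.tsum_le_tsum (fun j => Set.indicator_le_indicator_apply_of_subset h (abs_nonneg _))
    (hg.indicator A) (hg.indicator B)

end basic


section tail
variable {lam : ℕ → ℕ → ℝ}

-- tail bound: sS |lam i| (Ici T) tends to 0 as T → ∞
lemma tail_eq (hs : ∀ i, Summable fun j => |lam i j|) (i T : ℕ) :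
    sS (fun j => |lam i j|) (Set.Ici T) = (∑' j, |lam i j|) - ∑ j ∈ Finset.range T, |lam i j| := by
  have h : (Set.Iio T) ∪ (Set.Ici T) = (univ : Set ℕ) := Iio_union_Ici
  have := sS_union (f := fun j => |lam i j|) (A := Set.Iio T) (B := Set.Ici T) ((hs i)) (Iio_disjoint_Ici le_rfl)
  rw [h, sS_univ, sS_Iio] at this
  linarith

lemma tendsto_tail (hs : ∀ i, Summable fun j => |lam i j|) (i : ℕ) :
    Tendsto (fun T => sS (fun j => |lam i j|) (Set.Ici T)) atTop (𝓝 0) := by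
  have h := (hs i).hasSum.tendsto_sum_nat
  have : Tendsto (fun T => (∑' j, |lam i j|) - ∑ j ∈ Finset.range T, |lam i j|) atTop
      (𝓝 ((∑' j, |lam i j|) - ∑' j, |lam i j|)) := tendsto_const_nhds.sub h
  simpa [tail_eq hs i] using this

lemma tendsto_sS_finite (h1 : ∀ j, Tendsto (fun i => lam i j) atTop (𝓝 0)) {A : Set ℕ}
    (hA : A.Finite) : Tendsto (fun i => sS (lam i) A) atTop (𝓝 0) := by
  have : (fun i => sS (lam i) A) = fun i => ∑ j ∈ hA.toFinset, lam i j :=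
    funext fun i => sS_finite (lam i) hA
  rw [this]
  simpa using tendsto_finset_sum hA.toFinset (fun j _ => h1 j)

lemma tendsto_colabs (h1 : ∀ j, Tendsto (fun i => lam i j) atTop (𝓝 0)) (c : ℕ) :
    Tendsto (fun i => ∑ j ∈ Finset.range c, |lam i j|) atTop (𝓝 0) := by
  have : ∀ j, Tendsto (fun i => |lam i j|) atTop (𝓝 0) := by
    intro j; simpa using (h1 j).abs
  simpa using tendsto_finset_sum (Finset.range c) (fun j _ => this j)
end tail

lemma sS_hasSum {f : ℕ → ℝ} (hf : Summable f) (A : Set ℕ) :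
    HasSum (A.indicator f) (sS f A) := (hf.indicator A).hasSum



/-- The property of one step of the sliding-hump construction. -/
def Good (lam : ℕ → ℕ → ℝ) (U : Set ℕ) (c iprev : ℕ) (p : ℕ × ℕ × Finset ℕ) : Prop :=
  iprev < p.1 ∧ c ≤ p.2.1 ∧ p.2.2.Nonempty ∧
    (↑p.2.2 : Set ℕ) ⊆ (Set.Ici c ∩ Set.Iio p.2.1) \ U ∧
    (1/2 : ℝ) < ∑ j ∈ p.2.2, lam p.1 j ∧
    (∑ j ∈ Finset.range c, |lam p.1 j|) < 1/16 ∧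
    sS (fun j => |lam p.1 j|) (Set.Ici p.2.1) < 1/8

lemma exists_step {lam : ℕ → ℕ → ℝ}
    (h1 : ∀ j, Tendsto (fun i => lam i j) atTop (𝓝 0))
    (hs : ∀ i, Summable fun j => |lam i j|)
    (h3 : Tendsto (fun i => ∑' j, lam i j) atTop (𝓝 1))
    {U : Set ℕ} (hU : Tendsto (fun i => sS (lam i) U) atTop (𝓝 0))
    (c iprev : ℕ) : ∃ p, Good lam U c iprev p := by
  have hlami : ∀ i, Summable (lam i) := fun i => (hs i).of_abs
  -- choose the row i
  have ev1 : ∀ᶠ i in atTop, (7:ℝ)/8 < ∑' j, lam i j :=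
    h3.eventually_const_lt (by norm_num)
  have ev2 : ∀ᶠ i in atTop, |sS (lam i) U| < 1/16 := by
    have : Tendsto (fun i => |sS (lam i) U|) atTop (𝓝 0) := by simpa using hU.abs
    exact this.eventually_lt_const (by norm_num)
  have ev3 : ∀ᶠ i in atTop, (∑ j ∈ Finset.range c, |lam i j|) < 1/16 :=
    (tendsto_colabs h1 c).eventually_lt_const (by norm_num)
  have ev4 : ∀ᶠ i in atTop, iprev < i := eventually_gt_atTop iprev
  obtain ⟨i, hi1, hi2, hi3, hi4⟩ := (ev1.and (ev2.and (ev3.and ev4))).exists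
  -- the reservoir D
  set D : Set ℕ := Set.Ici c \ U with hD
  have hIci : sS (lam i) (Set.Ici c) = sS (lam i) univ - sS (lam i) (Set.Iio c) := by
    have := sS_union (f := lam i) (A := Set.Iio c) (B := Set.Ici c)
      (hlami i) (Iio_disjoint_Ici le_rfl)
    rw [Iio_union_Ici] at this; linarith
  have hsplit : sS (lam i) (Set.Ici c) = sS (lam i) (Set.Ici c ∩ U) + sS (lam i) D := by
    have := sS_inter_add_diff (f := lam i) (hlami i) U (Set.Ici c)
    simpa [hD] using this
  have hUsplit : sS (lam i) U = sS (lam i) (U ∩ Set.Ici c) + sS (lam i) (U \ Set.Ici c) := by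
    exact sS_inter_add_diff (hlami i) (Set.Ici c) U
  have habs1 : |sS (lam i) (Set.Iio c)| ≤ ∑ j ∈ Finset.range c, |lam i j| := by
    have := abs_sS_le (hs i) (le_refl (Set.Iio c))
    rwa [sS_Iio (fun j => |lam i j|) c] at this
  have habs2 : |sS (lam i) (U \ Set.Ici c)| ≤ ∑ j ∈ Finset.range c, |lam i j| := by
    have hsub : U \ Set.Ici c ⊆ Set.Iio c := by
      intro x hx; simpa using (Set.notMem_Ici.mp hx.2)
    have := abs_sS_le (hs i) hsub
    rwa [sS_Iio (fun j => |lam i j|) c] at this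
  have hDlb : (1:ℝ)/2 < sS (lam i) D := by
    have h5 : sS (lam i) (Set.Ici c ∩ U) = sS (lam i) (U ∩ Set.Ici c) := by
      rw [Set.inter_comm]
    rw [sS_univ] at hIci
    have b1 : |sS (lam i) (Set.Iio c)| < 1/16 := lt_of_le_of_lt habs1 hi3
    have b2 : |sS (lam i) (U \ Set.Ici c)| < 1/16 := lt_of_le_of_lt habs2 hi3
    have := abs_lt.mp hi2
    have := abs_lt.mp b1
    have := abs_lt.mp b2
    linarith
  -- choose the finite block B inside D
  -- choose finite B₀ with partial sum > 1/2
  have hsumD : HasSum (D.indicator (lam i)) (sS (lam i) D) := sS_hasSum (hlami i) D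
  have : ∀ᶠ B₀ : Finset ℕ in atTop, (1:ℝ)/2 < ∑ j ∈ B₀, D.indicator (lam i) j :=
    hsumD.eventually_const_lt hDlb
  obtain ⟨B₀, hB₀⟩ := this.exists
  classical
  set B : Finset ℕ := B₀.filter (fun j => j ∈ D) with hBdef
  have hBsum : ∑ j ∈ B, lam i j = ∑ j ∈ B₀, D.indicator (lam i) j := by
    rw [hBdef, Finset.sum_filter]
    exact Finset.sum_congr rfl fun j _ => by
      by_cases h : j ∈ D <;> simp [Set.indicator_apply, h]
  have hBD : (↑B : Set ℕ) ⊆ D := by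
    intro x hx
    simp only [hBdef, Finset.coe_filter, Set.mem_setOf_eq] at hx
    exact hx.2
  have hBne : B.Nonempty := by
    rw [Finset.nonempty_iff_ne_empty]
    intro h
    rw [h] at hBsum
    simp at hBsum
    rw [← hBsum] at hB₀
    norm_num at hB₀
  -- choose the tail threshold
  obtain ⟨T, hT⟩ := ((tendsto_tail hs i).eventually_lt_const
    (by norm_num : (0:ℝ) < 1/8)).exists
  refine ⟨⟨i, max (max c T) (B.sup id + 1), B⟩, hi4, ?_, hBne, ?_, ?_, hi3, ?_⟩
  · exact le_trans (le_max_left c T) (le_max_left _ _)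
  · intro x hx
    have hxD := hBD hx
    refine ⟨⟨hxD.1, ?_⟩, hxD.2⟩
    have : (x : ℕ) ≤ B.sup id := Finset.le_sup (f := id) (by exact_mod_cast hx)
    simp only [Set.mem_Iio]
    calc x ≤ B.sup id := this
      _ < B.sup id + 1 := Nat.lt_succ_self _
      _ ≤ max (max c T) (B.sup id + 1) := le_max_right _ _
  · rw [hBsum]; exact hB₀
  · refine lt_of_le_of_lt (sS_mono_abs (hs i) ?_) hT
    exact Set.Ici_subset_Ici.mpr (le_trans (le_max_right c T) (le_max_left _ _))


-- inclusion-exclusion for two sets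
lemma sS_union_ie {f : ℕ → ℝ} (hf : Summable f) (A B : Set ℕ) :
    sS f (A ∪ B) = sS f A + sS f B - sS f (A ∩ B) := by
  have h1 : sS f (A ∪ B) = sS f A + sS f (B \ A) := by
    rw [← sS_union hf disjoint_sdiff_self_right, Set.union_diff_self]
  have h2 : sS f B = sS f (B ∩ A) + sS f (B \ A) := sS_inter_add_diff hf A B
  rw [Set.inter_comm B A] at h2
  linarith

lemma tendsto_sS_biUnion {lam : ℕ → ℕ → ℝ}
    (h1 : ∀ j, Tendsto (fun i => lam i j) atTop (𝓝 0))
    (hs : ∀ i, Summable fun j => |lam i j|)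
    (g : ℕ → Set ℕ)
    (hpair : ∀ k l, g k = g l ∨ (g k ∩ g l).Finite)
    (hg0 : ∀ k, Tendsto (fun i => sS (lam i) (g k)) atTop (𝓝 0)) (m : ℕ) :
    Tendsto (fun i => sS (lam i) (⋃ k ∈ Finset.range (m+1), g k)) atTop (𝓝 0) := by
  have hlami : ∀ i, Summable (lam i) := fun i => (hs i).of_abs
  induction m with
  | zero => simpa using hg0 0
  | succ m ih =>
    have hU : (⋃ k ∈ Finset.range (m+2), g k) = g (m+1) ∪ ⋃ k ∈ Finset.range (m+1), g k := by
      rw [Finset.range_add_one]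
      simp [Set.biUnion_insert]
    by_cases hcase : ∃ k ∈ Finset.range (m+1), g (m+1) = g k
    · obtain ⟨k, hk, hgk⟩ := hcase
      have : (⋃ k ∈ Finset.range (m+2), g k) = ⋃ k ∈ Finset.range (m+1), g k := by
        rw [hU]
        apply Set.union_eq_self_of_subset_left
        rw [hgk]
        exact Set.subset_biUnion_of_mem hk
      rw [this]; exact ih
    · push_neg at hcase
      have hfin : ((g (m+1)) ∩ ⋃ k ∈ Finset.range (m+1), g k).Finite := by
        rw [Set.inter_iUnion₂]
        refine Set.Finite.biUnion (Finset.range (m+1)).finite_toSet (fun k hk => ?_)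
        rcases hpair (m+1) k with h | h
        · exact absurd h (hcase k (by simpa using hk))
        · exact h
      have heq : ∀ i, sS (lam i) (⋃ k ∈ Finset.range (m+2), g k) =
          sS (lam i) (g (m+1)) + sS (lam i) (⋃ k ∈ Finset.range (m+1), g k)
          - sS (lam i) ((g (m+1)) ∩ ⋃ k ∈ Finset.range (m+1), g k) := by
        intro i
        rw [hU]
        exact sS_union_ie (hlami i) _ _
      simp only [heq]
      have := ((hg0 (m+1)).add ih).sub (tendsto_sS_finite h1 hfin)
      simpa using this

noncomputable def pickSeq (P : ℕ → ℕ → ℕ → ℕ × ℕ × Finset ℕ → Prop)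
    (hex : ∀ m c iprev, ∃ p, P m c iprev p) : ℕ → ℕ × ℕ × Finset ℕ
  | 0 => (hex 0 0 0).choose
  | m+1 => (hex (m+1) (pickSeq P hex m).2.1 (pickSeq P hex m).1).choose

def cPrev (σ : ℕ → ℕ × ℕ × Finset ℕ) : ℕ → ℕ
  | 0 => 0
  | m+1 => (σ m).2.1

def iPrev (σ : ℕ → ℕ × ℕ × Finset ℕ) : ℕ → ℕ
  | 0 => 0
  | m+1 => (σ m).1

lemma pickSeq_spec (P : ℕ → ℕ → ℕ → ℕ × ℕ × Finset ℕ → Prop)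
    (hex : ∀ m c iprev, ∃ p, P m c iprev p) (m : ℕ) :
    P m (cPrev (pickSeq P hex) m) (iPrev (pickSeq P hex) m) (pickSeq P hex m) := by
  cases m with
  | zero => exact (hex 0 0 0).choose_spec
  | succ m => exact (hex (m+1) (pickSeq P hex m).2.1 (pickSeq P hex m).1).choose_spec


lemma keyLemma {lam : ℕ → ℕ → ℝ}
    (h1 : ∀ j, Tendsto (fun i => lam i j) atTop (𝓝 0))
    (hs : ∀ i, Summable fun j => |lam i j|)
    (h3 : Tendsto (fun i => ∑' j, lam i j) atTop (𝓝 1))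
    (G : Set (Set ℕ)) (hGc : G.Countable)
    (hGad : ∀ A ∈ G, ∀ B ∈ G, A ≠ B → (A ∩ B).Finite)
    (hG0 : ∀ A ∈ G, Tendsto (fun i => sS (lam i) A) atTop (𝓝 0)) :
    ∃ N : Set ℕ, N.Infinite ∧ (∀ M ∈ G, (N ∩ M).Finite) ∧
      ¬ Tendsto (fun i => sS (lam i) N) atTop (𝓝 0) := by
  classical
  obtain ⟨g, hg⟩ : ∃ g : ℕ → Set ℕ, insert ∅ G = Set.range g :=
    (hGc.insert ∅).exists_eq_range (Set.insert_nonempty _ _)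
  have hmem : ∀ k, g k = ∅ ∨ g k ∈ G := by
    intro k
    have : g k ∈ insert ∅ G := by rw [hg]; exact Set.mem_range_self k
    simpa using this
  have hpair : ∀ k l, g k = g l ∨ (g k ∩ g l).Finite := by
    intro k l
    rcases hmem k with h | h
    · right; rw [h]; simp
    rcases hmem l with h' | h'
    · right; rw [h']; simp
    rcases eq_or_ne (g k) (g l) with he | he
    · exact Or.inl he
    · exact Or.inr (hGad _ h _ h' he)
  have hg0 : ∀ k, Tendsto (fun i => sS (lam i) (g k)) atTop (𝓝 0) := by
    intro k
    rcases hmem k with h | h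
    · rw [h]
      simpa [sS_empty] using tendsto_const_nhds (α := ℝ) (f := atTop (α := ℕ))
    · exact hG0 _ h
  set U : ℕ → Set ℕ := fun m => ⋃ k ∈ Finset.range (m+1), g k with hUdef
  have hU : ∀ m, Tendsto (fun i => sS (lam i) (U m)) atTop (𝓝 0) :=
    fun m => tendsto_sS_biUnion h1 hs g hpair hg0 m
  have hex : ∀ m c iprev, ∃ p, Good lam (U m) c iprev p :=
    fun m c iprev => exists_step h1 hs h3 (hU m) c iprev
  set σ := pickSeq (fun m c iprev p => Good lam (U m) c iprev p) hex with hσ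
  set iseq : ℕ → ℕ := fun m => (σ m).1 with hi
  set d : ℕ → ℕ := fun m => (σ m).2.1 with hd
  set B : ℕ → Finset ℕ := fun m => (σ m).2.2 with hB
  set c : ℕ → ℕ := cPrev σ with hc
  have spec : ∀ m, Good lam (U m) (c m) (iPrev σ m) (σ m) :=
    fun m => pickSeq_spec _ hex m
  have G2 : ∀ m, c m ≤ d m := fun m => (spec m).2.1
  have G3 : ∀ m, (B m).Nonempty := fun m => (spec m).2.2.1
  have G4 : ∀ m, (↑(B m) : Set ℕ) ⊆ (Set.Ici (c m) ∩ Set.Iio (d m)) \ U m :=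
    fun m => (spec m).2.2.2.1
  have G5 : ∀ m, (1/2 : ℝ) < ∑ j ∈ B m, lam (iseq m) j := fun m => (spec m).2.2.2.2.1
  have G6 : ∀ m, (∑ j ∈ Finset.range (c m), |lam (iseq m) j|) < 1/16 :=
    fun m => (spec m).2.2.2.2.2.1
  have G7 : ∀ m, sS (fun j => |lam (iseq m) j|) (Set.Ici (d m)) < 1/8 :=
    fun m => (spec m).2.2.2.2.2.2
  have hceq : ∀ m, c (m+1) = d m := fun m => rfl
  have hcmono : Monotone c := monotone_nat_of_le_succ (fun m => by rw [hceq]; exact G2 m)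
  have himono : StrictMono iseq := strictMono_nat_of_lt_succ (fun m => (spec (m+1)).1)
  set N : Set ℕ := ⋃ m, (↑(B m) : Set ℕ) with hN
  -- position facts
  have hBlo : ∀ m, ∀ x ∈ B m, c m ≤ x := fun m x hx => ((G4 m) hx).1.1
  have hBhi : ∀ m, ∀ x ∈ B m, x < d m := fun m x hx => ((G4 m) hx).1.2
  have hBU : ∀ m, ∀ x ∈ B m, x ∉ U m := fun m x hx => ((G4 m) hx).2
  -- N is infinite
  have hNinf : N.Infinite := by
    have hmax : ∀ m, (B m).max' (G3 m) ∈ N := fun m =>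
      Set.mem_iUnion.mpr ⟨m, by exact_mod_cast (B m).max'_mem (G3 m)⟩
    have hsm : StrictMono (fun m => (B m).max' (G3 m)) := by
      apply strictMono_nat_of_lt_succ
      intro m
      calc (B m).max' (G3 m) < d m := hBhi m _ ((B m).max'_mem (G3 m))
        _ = c (m+1) := (hceq m).symm
        _ ≤ (B (m+1)).max' (G3 (m+1)) := hBlo (m+1) _ ((B (m+1)).max'_mem (G3 (m+1)))
    exact Set.infinite_of_injective_forall_mem hsm.injective hmax
  -- almost disjoint from G
  have hNad : ∀ M ∈ G, (N ∩ M).Finite := by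
    intro M hM
    obtain ⟨k, hk⟩ : ∃ k, g k = M := by
      have : M ∈ insert ∅ G := Set.mem_insert_of_mem _ hM
      rw [hg] at this
      obtain ⟨k, hk⟩ := this
      exact ⟨k, hk⟩
    have hsub : N ∩ M ⊆ ⋃ l ∈ Finset.range k, (↑(B l) : Set ℕ) := by
      rintro x ⟨hxN, hxM⟩
      obtain ⟨l, hl⟩ := Set.mem_iUnion.mp hxN
      rcases lt_or_ge l k with h | h
      · exact Set.mem_biUnion (Finset.mem_coe.mpr (Finset.mem_range.mpr h)) hl
      · exfalso
        apply hBU l x (by exact_mod_cast hl)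
        rw [hUdef]
        refine Set.mem_biUnion (by simp; omega : k ∈ Finset.range (l+1)) ?_
        rw [hk]; exact hxM
    exact Set.Finite.subset (Set.Finite.biUnion (Finset.range k).finite_toSet
      (fun l _ => (B l).finite_toSet)) hsub
  -- the lower bound at rows iseq m
  have hbound : ∀ m, (5:ℝ)/16 < sS (lam (iseq m)) N := by
    intro m
    have hlam : Summable (lam (iseq m)) := (hs (iseq m)).of_abs
    set A1 : Set ℕ := N ∩ Set.Iio (c m) with hA1
    set A2 : Set ℕ := N ∩ (Set.Ici (c m) ∩ Set.Iio (d m)) with hA2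
    set A3 : Set ℕ := N ∩ Set.Ici (d m) with hA3
    have hA2B : A2 = (↑(B m) : Set ℕ) := by
      apply Set.Subset.antisymm
      · rintro x ⟨hxN, hcx, hxd⟩
        obtain ⟨l, hl⟩ := Set.mem_iUnion.mp hxN
        have hl' : x ∈ B l := by exact_mod_cast hl
        rcases lt_trichotomy l m with h | h | h
        · exfalso
          have hxdl : x < d l := hBhi l x hl'
          have hdc : (d l : ℕ) ≤ c m := by
            rw [← hceq l]; exact hcmono h
          have hcx' : c m ≤ x := hcx
          omega
        · rw [← h]; exact_mod_cast hl'
        · exfalso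
          have h1x : c l ≤ x := hBlo l x hl'
          have : d m ≤ c l := by rw [← hceq m]; exact hcmono h
          simp only [Set.mem_Iio] at hxd
          omega
      · intro x hx
        have hx' : x ∈ B m := by exact_mod_cast hx
        exact ⟨Set.mem_iUnion.mpr ⟨m, hx⟩, hBlo m x hx', hBhi m x hx'⟩
    have hNsplit : N = A1 ∪ (A2 ∪ A3) := by
      ext x
      constructor
      · intro hx
        rcases lt_or_ge x (c m) with h | h
        · exact Or.inl ⟨hx, h⟩
        rcases lt_or_ge x (d m) with h' | h'
        · exact Or.inr (Or.inl ⟨hx, h, h'⟩)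
        · exact Or.inr (Or.inr ⟨hx, h'⟩)
      · rintro (⟨h, _⟩ | ⟨h, _⟩ | ⟨h, _⟩) <;> exact h
    have hdisj1 : Disjoint A1 (A2 ∪ A3) := by
      refine Set.disjoint_left.mpr ?_
      rintro x ⟨_, hx1⟩ (⟨_, hx2, _⟩ | ⟨_, hx3⟩)
      · simp only [Set.mem_Iio] at hx1; simp only [Set.mem_Ici] at hx2; omega
      · simp only [Set.mem_Iio] at hx1
        simp only [Set.mem_Ici] at hx3
        have := G2 m; omega
    have hdisj2 : Disjoint A2 A3 := by
      refine Set.disjoint_left.mpr ?_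
      rintro x ⟨_, _, hx2⟩ ⟨_, hx3⟩
      simp only [Set.mem_Iio] at hx2
      simp only [Set.mem_Ici] at hx3
      omega
    have hsum : sS (lam (iseq m)) N
        = sS (lam (iseq m)) A1 + (sS (lam (iseq m)) A2 + sS (lam (iseq m)) A3) := by
      rw [hNsplit, sS_union hlam hdisj1, sS_union hlam hdisj2]
    have hb1 : |sS (lam (iseq m)) A1| ≤ ∑ j ∈ Finset.range (c m), |lam (iseq m) j| := by
      have := abs_sS_le (hs (iseq m)) (Set.inter_subset_right : A1 ⊆ Set.Iio (c m))
      rwa [sS_Iio (fun j => |lam (iseq m) j|) (c m)] at this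
    have hb3 : |sS (lam (iseq m)) A3| ≤ sS (fun j => |lam (iseq m) j|) (Set.Ici (d m)) :=
      abs_sS_le (hs (iseq m)) (Set.inter_subset_right : A3 ⊆ Set.Ici (d m))
    have hb2 : sS (lam (iseq m)) A2 = ∑ j ∈ B m, lam (iseq m) j := by
      rw [hA2B, sS_finset]
    have t1 := abs_lt.mp (lt_of_le_of_lt hb1 (G6 m))
    have t3 := abs_lt.mp (lt_of_le_of_lt hb3 (G7 m))
    have t2 := G5 m
    rw [hsum, hb2]
    linarith
  -- not tendsto 0
  refine ⟨N, hNinf, hNad, fun hT => ?_⟩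
  have hcomp : Tendsto (fun m => sS (lam (iseq m)) N) atTop (𝓝 0) :=
    hT.comp himono.tendsto_atTop
  have : (5:ℝ)/16 ≤ 0 :=
    ge_of_tendsto hcomp (Filter.Eventually.of_forall (fun m => le_of_lt (hbound m)))
  norm_num at this


-- the base almost disjoint family
def bset (k : ℕ) : Set ℕ := Set.range (fun t => Nat.pair k t)
def baseF : Set (Set ℕ) := Set.range bset

lemma bset_infinite (k : ℕ) : (bset k).Infinite :=
  Set.infinite_range_of_injective (fun a b h => (Nat.pair_eq_pair.mp h).2)

lemma bset_disj {k l : ℕ} (h : k ≠ l) : bset k ∩ bset l = ∅ := by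
  ext x
  simp only [bset, Set.mem_inter_iff, Set.mem_range, Set.mem_empty_iff_false, iff_false]
  rintro ⟨⟨t, rfl⟩, ⟨s, hs⟩⟩
  exact h ((Nat.pair_eq_pair.mp hs).1).symm

lemma bset_inj : Function.Injective bset := by
  intro k l h
  by_contra hne
  have : Nat.pair k 0 ∈ bset k ∩ bset l := ⟨⟨0, rfl⟩, h ▸ ⟨0, rfl⟩⟩
  rw [bset_disj hne] at this
  exact this

lemma baseF_countable : baseF.Countable := Set.countable_range bset
lemma baseF_infinite : baseF.Infinite := Set.infinite_range_of_injective bset_inj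
lemma baseF_mem_infinite : ∀ M ∈ baseF, M.Infinite := by
  rintro M ⟨k, rfl⟩; exact bset_infinite k
lemma baseF_ad : ∀ M ∈ baseF, ∀ M' ∈ baseF, M ≠ M' → (M ∩ M').Finite := by
  rintro M ⟨k, rfl⟩ M' ⟨l, rfl⟩ h
  rw [bset_disj (fun hkl => h (by rw [hkl]))]
  exact Set.finite_empty

-- the alphabet of tasks
abbrev MTask := (ℕ → ℕ → ℝ) ⊕ Set ℕ

open Classical in
noncomputable def step (Gs : Set (Set ℕ)) : MTask → Set (Set ℕ)
  | Sum.inl lam =>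
    if h : ∃ N : Set ℕ, N.Infinite ∧ (∀ M ∈ Gs, (N ∩ M).Finite) ∧
        ¬ Tendsto (fun i => sS (lam i) N) atTop (𝓝 0) then {h.choose} else ∅
  | Sum.inr S => if S.Infinite ∧ ∀ M ∈ Gs, (S ∩ M).Finite then {S} else ∅

lemma step_mem {Gs : Set (Set ℕ)} {a : MTask} {N : Set ℕ} (h : N ∈ step Gs a) :
    N.Infinite ∧ ∀ M ∈ Gs, (N ∩ M).Finite := by
  cases a with
  | inl lam =>
    simp only [step] at h
    split at h
    · next hex =>
      rw [Set.mem_singleton_iff] at h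
      subst h
      exact ⟨hex.choose_spec.1, hex.choose_spec.2.1⟩
    · exact absurd h (Set.notMem_empty N)
  | inr S =>
    simp only [step] at h
    split at h
    · next hc =>
      rw [Set.mem_singleton_iff] at h
      subst h
      exact ⟨hc.1, hc.2⟩
    · exact absurd h (Set.notMem_empty N)

lemma step_subsingleton (Gs : Set (Set ℕ)) (a : MTask) : (step Gs a).Subsingleton := by
  cases a with
  | inl lam =>
    simp only [step]; split
    · exact Set.subsingleton_singleton
    · exact Set.subsingleton_empty
  | inr S =>
    simp only [step]; split
    · exact Set.subsingleton_singleton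
    · exact Set.subsingleton_empty

-- index type
abbrev J : Type := (Cardinal.aleph 1).ord.ToType

lemma J_Iio_countable (x : J) : (Set.Iio x).Countable :=
  (Cardinal.countable_iff_lt_aleph_one _).mpr (Cardinal.mk_Iio_ord_toType x)

noncomputable def stage (sur : J → MTask) : J → Set (Set ℕ) :=
  (IsWellFounded.wf (α := J) (r := (· < ·))).fix
    (fun x rec => step (baseF ∪ ⋃ y : Set.Iio x, rec y.1 y.2) (sur x))

noncomputable def famBelow (sur : J → MTask) (x : J) : Set (Set ℕ) :=
  baseF ∪ ⋃ y : Set.Iio x, stage sur y.1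

lemma stage_eq (sur : J → MTask) (x : J) : stage sur x = step (famBelow sur x) (sur x) := by
  rw [stage, WellFounded.fix_eq]
  rfl

noncomputable def Ffam (sur : J → MTask) : Set (Set ℕ) := baseF ∪ ⋃ x, stage sur x

lemma famBelow_subset (sur : J → MTask) (x : J) : famBelow sur x ⊆ Ffam sur := by
  apply Set.union_subset_union_right
  intro N hN
  obtain ⟨y, hy⟩ := Set.mem_iUnion.mp hN
  exact Set.mem_iUnion.mpr ⟨y.1, hy⟩

lemma famBelow_countable (sur : J → MTask) (x : J) : (famBelow sur x).Countable := by
  refine Set.Countable.union baseF_countable ?_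
  haveI := (J_Iio_countable x).to_subtype
  exact Set.countable_iUnion fun y => ((step_subsingleton _ _).countable).mono
    (le_of_eq (stage_eq sur y.1))

lemma mem_Ffam (sur : J → MTask) {N : Set ℕ} (h : N ∈ Ffam sur) :
    N ∈ baseF ∨ ∃ x, N ∈ stage sur x := by
  rcases h with h | h
  · exact Or.inl h
  · exact Or.inr (Set.mem_iUnion.mp h)

lemma stage_subsingleton (sur : J → MTask) (x : J) : (stage sur x).Subsingleton := by
  rw [stage_eq]; exact step_subsingleton _ _

lemma Ffam_mem_infinite (sur : J → MTask) : ∀ N ∈ Ffam sur, N.Infinite := by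
  intro N hN
  rcases mem_Ffam sur hN with h | ⟨x, hx⟩
  · exact baseF_mem_infinite N h
  · rw [stage_eq] at hx
    exact (step_mem hx).1

lemma stage_ad (sur : J → MTask) {x : J} {N : Set ℕ} (hN : N ∈ stage sur x) :
    ∀ M ∈ famBelow sur x, (N ∩ M).Finite := by
  rw [stage_eq] at hN
  exact (step_mem hN).2

lemma mem_famBelow_of_stage (sur : J → MTask) {x y : J} (hxy : x < y) {N : Set ℕ}
    (hN : N ∈ stage sur x) : N ∈ famBelow sur y :=
  Or.inr (Set.mem_iUnion.mpr ⟨⟨x, hxy⟩, hN⟩)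

lemma base_mem_famBelow (sur : J → MTask) (x : J) {N : Set ℕ} (hN : N ∈ baseF) :
    N ∈ famBelow sur x := Or.inl hN

lemma Ffam_ad (sur : J → MTask) :
    ∀ M ∈ Ffam sur, ∀ M' ∈ Ffam sur, M ≠ M' → (M ∩ M').Finite := by
  intro M hM M' hM' hne
  rcases mem_Ffam sur hM with hb | ⟨x, hx⟩ <;> rcases mem_Ffam sur hM' with hb' | ⟨y, hy⟩
  · exact baseF_ad M hb M' hb' hne
  · rw [Set.inter_comm]
    exact stage_ad sur hy M (base_mem_famBelow sur y hb)
  · exact stage_ad sur hx M' (base_mem_famBelow sur x hb')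
  · rcases lt_trichotomy x y with h | h | h
    · rw [Set.inter_comm]
      exact stage_ad sur hy M (mem_famBelow_of_stage sur h hx)
    · subst h
      exact absurd (stage_subsingleton sur x hx hy) hne
    · exact stage_ad sur hx M' (mem_famBelow_of_stage sur h hy)

lemma Ffam_maximal (sur : J → MTask) (hsur : Function.Surjective sur) (S : Set ℕ)
    (hS : S.Infinite) : ∃ M ∈ Ffam sur, (S ∩ M).Infinite := by
  obtain ⟨x, hx⟩ := hsur (Sum.inr S)
  by_cases h : ∃ M ∈ famBelow sur x, (S ∩ M).Infinite
  · obtain ⟨M, hM, hi⟩ := h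
    exact ⟨M, famBelow_subset sur x hM, hi⟩
  · push_neg at h
    have hfin : ∀ M ∈ famBelow sur x, (S ∩ M).Finite :=
      fun M hM => h M hM
    have hmem : S ∈ stage sur x := by
      rw [stage_eq, hx]
      simp only [step]
      rw [if_pos ⟨hS, hfin⟩]
      exact Set.mem_singleton S
    exact ⟨S, Or.inr (Set.mem_iUnion.mpr ⟨x, hmem⟩), by rwa [Set.inter_self]⟩

lemma Ffam_matrix (sur : J → MTask) (hsur : Function.Surjective sur) (lam : ℕ → ℕ → ℝ)
    (h1 : ∀ j, Tendsto (fun i => lam i j) atTop (𝓝 0))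
    (hs : ∀ i, Summable fun j => |lam i j|)
    (h3 : Tendsto (fun i => ∑' j, lam i j) atTop (𝓝 1)) :
    ∃ M ∈ Ffam sur, ¬ Tendsto (fun i => sS (lam i) M) atTop (𝓝 0) := by
  obtain ⟨x, hx⟩ := hsur (Sum.inl lam)
  by_cases h : ∃ M ∈ famBelow sur x, ¬ Tendsto (fun i => sS (lam i) M) atTop (𝓝 0)
  · obtain ⟨M, hM, hn⟩ := h
    exact ⟨M, famBelow_subset sur x hM, hn⟩
  · push_neg at h
    have hex := keyLemma h1 hs h3 (famBelow sur x) (famBelow_countable sur x)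
      (fun A hA B hB hne =>
        Ffam_ad sur A (famBelow_subset sur x hA) B (famBelow_subset sur x hB) hne) h
    have hmem : hex.choose ∈ stage sur x := by
      rw [stage_eq, hx]
      simp only [step]
      rw [dif_pos hex]
      exact Set.mem_singleton _
    exact ⟨hex.choose, Or.inr (Set.mem_iUnion.mpr ⟨x, hmem⟩), hex.choose_spec.2.2⟩

open Cardinal in
lemma exists_sur (hCH : Cardinal.continuum.{0} = Cardinal.aleph.{0} 1) :
    ∃ sur : J → MTask, Function.Surjective sur := by
  have hMT : #MTask ≤ #J := by
    rw [Cardinal.mk_ord_toType]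
    rw [Cardinal.mk_sum, Cardinal.lift_id, Cardinal.lift_id]
    have h2 : #(Set ℕ) = Cardinal.continuum := by
      rw [Cardinal.mk_set, Cardinal.mk_nat, Cardinal.two_power_aleph0]
    have h1 : #(ℕ → ℕ → ℝ) = Cardinal.continuum := by
      rw [Cardinal.mk_arrow, Cardinal.lift_id, Cardinal.lift_id, Cardinal.mk_arrow,
        Cardinal.lift_id, Cardinal.lift_id, Cardinal.mk_real, Cardinal.mk_nat,
        ← Cardinal.power_mul, Cardinal.aleph0_mul_aleph0, Cardinal.continuum_power_aleph0]
    rw [h1, h2, Cardinal.add_eq_self Cardinal.aleph0_le_continuum, hCH]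
  obtain ⟨f⟩ := (Cardinal.le_def _ _).mp hMT
  haveI : Nonempty MTask := ⟨Sum.inr ∅⟩
  exact ⟨Function.invFun f, Function.invFun_surjective f.injective⟩

/-- Under the Continuum Hypothesis there exists a maximal almost disjoint
family `F` of infinite subsets of `ℕ` such that for every matrix `(λ i j)` with
(i) columns tending to `0`, (ii) absolutely summable rows, (iii) row sums tending to `1`,
there exists `N ∈ F` such that `(Σ_{j ∈ N} λ i j)_i` does not converge to `0`. -/

theorem statement18 (hCH : Cardinal.continuum = Cardinal.aleph 1) :
    ∃ F : Set (Set ℕ), F.Infinite ∧ (∀ M ∈ F, M.Infinite) ∧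
      (∀ M ∈ F, ∀ M' ∈ F, M ≠ M' → (M ∩ M').Finite) ∧
      (∀ S : Set ℕ, S.Infinite → ∃ M ∈ F, (S ∩ M).Infinite) ∧
      ∀ lam : ℕ → ℕ → ℝ,
        (∀ j, Tendsto (fun i => lam i j) atTop (𝓝 0)) →
        (∀ i, Summable (fun j => |lam i j|)) →
        Tendsto (fun i => ∑' j, lam i j) atTop (𝓝 1) →
        ∃ M ∈ F, ¬ Tendsto (fun i => ∑' j : ↥M, lam i (j : ℕ)) atTop (𝓝 0) := by
  have h0 : Cardinal.continuum.{0} = Cardinal.aleph.{0} 1 := by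
    apply Cardinal.lift_injective
    rw [Cardinal.lift_continuum, Cardinal.lift_aleph, Ordinal.lift_one, hCH]
  obtain ⟨sur, hsur⟩ := exists_sur h0
  refine ⟨Ffam sur, baseF_infinite.mono Set.subset_union_left, Ffam_mem_infinite sur,
    Ffam_ad sur, Ffam_maximal sur hsur, ?_⟩
  intro lam h1 hs h3
  obtain ⟨M, hM, hn⟩ := Ffam_matrix sur hsur lam h1 hs h3
  refine ⟨M, hM, ?_⟩
  have hform : (fun i => ∑' j : ↥M, lam i (j : ℕ)) = fun i => sS (lam i) M :=
    funext fun i => tsum_subtype M (lam i)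
  rw [hform]
  exact hn
end

section
/- Let X be a real Banach space with property (E'), i.e., every convex, norm-bounded, w*-sequentially closed subset of X* is w*-closed. Then X is fully Mackey complete if and only if X is fully Mazur. -/
open Filter Topology

noncomputable section

variable (X : Type*) [NormedAddCommGroup X] [NormedSpace ℝ X]

/-- The dual norm of an element of the weak-star dual. -/
def dnorm (y : WeakDual ℝ X) : ℝ := ‖WeakDual.toStrongDual y‖

/-- A subspace `Y ⊆ X*` is norming if there is `c > 0` with
`c·‖x‖ ≤ sup {y x : y ∈ Y, ‖y‖ ≤ 1}` for every `x ∈ X`. -/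
def IsNorming (Y : Submodule ℝ (WeakDual ℝ X)) : Prop :=
  ∃ c > 0, ∀ x : X, c * ‖x‖ ≤ sSup {r : ℝ | ∃ y ∈ Y, dnorm X y ≤ 1 ∧ r = y x}

/-- `Y` is closed for the dual norm topology of `X*`. -/
def NormClosed (Y : Submodule ℝ (WeakDual ℝ X)) : Prop :=
  IsClosed ((fun y => WeakDual.toStrongDual y) '' (Y : Set (WeakDual ℝ X)))

/-- A linear functional on `Y ⊆ X*` is weak-star sequentially continuous. -/
def WStarSeqCont {Y : Submodule ℝ (WeakDual ℝ X)} (f : Y →ₗ[ℝ] ℝ) : Prop :=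
  ∀ (u : ℕ → Y) (y : Y),
    Tendsto (fun n => (u n : WeakDual ℝ X)) atTop (𝓝 (y : WeakDual ℝ X)) →
      Tendsto (fun n => f (u n)) atTop (𝓝 (f y))

/-- `(Y, w*)` has the Mazur property: every weak-star sequentially continuous
linear functional on `Y` is weak-star continuous. -/
def MazurProp (Y : Submodule ℝ (WeakDual ℝ X)) : Prop :=
  ∀ f : Y →ₗ[ℝ] ℝ, WStarSeqCont X f → Continuous f

/-- `X` is fully Mazur. -/
def FullyMazur : Prop :=
  ∀ Y : Submodule ℝ (WeakDual ℝ X), IsNorming X Y → NormClosed X Y → MazurProp X Y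

/-- The Grothendieck condition on a linear functional `f : Y → ℝ`: the restriction of `f`
to every absolutely convex weak-star compact subset of `Y` is weak-star continuous. -/
def GrothendieckCond {Y : Submodule ℝ (WeakDual ℝ X)} (f : Y →ₗ[ℝ] ℝ) : Prop :=
  ∀ K : Set (WeakDual ℝ X), K ⊆ (Y : Set (WeakDual ℝ X)) → Convex ℝ K → Balanced ℝ K →
    IsCompact K → ContinuousOn (fun y : Y => f y) (Subtype.val ⁻¹' K)

/-- Completeness of the Mackey space `(X, μ(X,Y))`, via Grothendieck's criterion. -/
def MackeyComplete (Y : Submodule ℝ (WeakDual ℝ X)) : Prop :=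
  ∀ f : Y →ₗ[ℝ] ℝ, GrothendieckCond X f → Continuous f

/-- `X` is fully Mackey complete. -/
def FullyMackeyComplete : Prop :=
  ∀ Y : Submodule ℝ (WeakDual ℝ X), IsNorming X Y → NormClosed X Y → MackeyComplete X Y

/-- `S₁(A)`: the set of weak-star limits of sequences contained in `A`. -/
def S1 (A : Set (WeakDual ℝ X)) : Set (WeakDual ℝ X) :=
  {z | ∃ u : ℕ → WeakDual ℝ X, (∀ n, u n ∈ A) ∧ Tendsto u atTop (𝓝 z)}

end

section St19

variable {X : Type*} [NormedAddCommGroup X] [NormedSpace ℝ X]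

theorem St19.norm_bound_of_compact [CompleteSpace X] {K : Set (WeakDual ℝ X)} (hK : IsCompact K) :
    ∃ M : ℝ, ∀ z ∈ K, ‖WeakDual.toStrongDual z‖ ≤ M := by
  have hpt : ∀ x : X, ∃ C, ∀ i : K, ‖WeakDual.toStrongDual (i : WeakDual ℝ X) x‖ ≤ C := by
    intro x
    have hc : IsCompact ((fun z : WeakDual ℝ X => z x) '' K) :=
      hK.image (WeakDual.eval_continuous x)
    obtain ⟨C, hC⟩ := hc.isBounded.exists_norm_le
    exact ⟨C, fun i => hC _ ⟨i, i.2, rfl⟩⟩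
  obtain ⟨C', hC'⟩ := banach_steinhaus (g := fun i : K => WeakDual.toStrongDual (i : WeakDual ℝ X))
    hpt
  exact ⟨C', fun z hz => hC' ⟨z, hz⟩⟩

/-- The sublevel set of a w*-sequentially continuous functional on a compact `K ⊆ Y`
is w*-closed, assuming property (E'). -/
theorem St19.isClosed_sublevel [CompleteSpace X]
    (hE' : ∀ C : Set (WeakDual ℝ X), Convex ℝ C → (∃ M : ℝ, ∀ y ∈ C, dnorm X y ≤ M) →
      (∀ (u : ℕ → WeakDual ℝ X) (z : WeakDual ℝ X),
        (∀ n, u n ∈ C) → Tendsto u atTop (𝓝 z) → z ∈ C) →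
      IsClosed C)
    {Y : Submodule ℝ (WeakDual ℝ X)} (f : Y →ₗ[ℝ] ℝ) (hf : WStarSeqCont X f)
    {K : Set (WeakDual ℝ X)} (hKY : K ⊆ (Y : Set (WeakDual ℝ X))) (hKconv : Convex ℝ K)
    (hKcomp : IsCompact K) (a : ℝ) :
    IsClosed {z : WeakDual ℝ X | ∃ hz : z ∈ Y, z ∈ K ∧ f ⟨z, hz⟩ ≤ a} := by
  apply hE'
  · rintro z₁ ⟨hz₁, hK₁, hf₁⟩ z₂ ⟨hz₂, hK₂, hf₂⟩ s t hs ht hst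
    refine ⟨Y.add_mem (Y.smul_mem s hz₁) (Y.smul_mem t hz₂), hKconv hK₁ hK₂ hs ht hst, ?_⟩
    have : (⟨s • z₁ + t • z₂, _⟩ : Y) = s • (⟨z₁, hz₁⟩ : Y) + t • (⟨z₂, hz₂⟩ : Y) :=
      Subtype.ext rfl
    rw [this, map_add, map_smul, map_smul]
    calc s • f ⟨z₁, hz₁⟩ + t • f ⟨z₂, hz₂⟩ ≤ s * a + t * a := by
          apply add_le_add
          · exact mul_le_mul_of_nonneg_left hf₁ hs
          · exact mul_le_mul_of_nonneg_left hf₂ ht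
      _ = a := by rw [← add_mul, hst, one_mul]
  · obtain ⟨M, hM⟩ := St19.norm_bound_of_compact hKcomp
    exact ⟨M, fun z hz => hM z hz.2.1⟩
  · rintro u z hu hulim
    have hzK : z ∈ K := hKcomp.isClosed.mem_of_tendsto hulim (Eventually.of_forall fun n =>
      (hu n).2.1)
    have hzY : z ∈ Y := hKY hzK
    refine ⟨hzY, hzK, ?_⟩
    have := hf (fun n => ⟨u n, (hu n).1⟩) ⟨z, hzY⟩ hulim
    exact le_of_tendsto this (Eventually.of_forall fun n => (hu n).2.2)

theorem St19.seqCont_grothendieck [CompleteSpace X]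
    (hE' : ∀ C : Set (WeakDual ℝ X), Convex ℝ C → (∃ M : ℝ, ∀ y ∈ C, dnorm X y ≤ M) →
      (∀ (u : ℕ → WeakDual ℝ X) (z : WeakDual ℝ X),
        (∀ n, u n ∈ C) → Tendsto u atTop (𝓝 z) → z ∈ C) →
      IsClosed C)
    {Y : Submodule ℝ (WeakDual ℝ X)} (f : Y →ₗ[ℝ] ℝ) (hf : WStarSeqCont X f) :
    GrothendieckCond X f := by
  intro K hKY hKconv _hKbal hKcomp
  rw [continuousOn_iff_continuous_restrict]
  rw [continuous_iff_lower_upperSemicontinuous]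
  have key : ∀ (g : Y →ₗ[ℝ] ℝ), WStarSeqCont X g → ∀ a : ℝ,
      IsClosed ((Set.restrict (Subtype.val ⁻¹' K) (fun y : Y => g y)) ⁻¹' Set.Iic a) := by
    intro g hg a
    have hC := St19.isClosed_sublevel hE' g hg hKY hKconv hKcomp a
    have : (Set.restrict (Subtype.val ⁻¹' K) (fun y : Y => g y)) ⁻¹' Set.Iic a =
        (fun p : (Subtype.val ⁻¹' K : Set Y) => ((p : Y) : WeakDual ℝ X)) ⁻¹'
          {z : WeakDual ℝ X | ∃ hz : z ∈ Y, z ∈ K ∧ g ⟨z, hz⟩ ≤ a} := by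
      ext p
      simp only [Set.mem_preimage, Set.mem_Iic, Set.restrict_apply, Set.mem_setOf_eq]
      constructor
      · intro h
        exact ⟨(p : Y).2, p.2, h⟩
      · rintro ⟨hz, -, h⟩
        exact h
    rw [this]
    exact hC.preimage (continuous_subtype_val.comp continuous_subtype_val)
  constructor
  · rw [lowerSemicontinuous_iff_isClosed_preimage]
    intro a
    exact key f hf a
  · rw [upperSemicontinuous_iff_isClosed_preimage]
    intro a
    have hneg : WStarSeqCont X (-f) := by
      intro u y hu
      simpa using (hf u y hu).neg
    have hcl := key (-f) hneg (-a)
    convert hcl using 1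
    ext p
    simp only [Set.mem_preimage, Set.mem_Iic, Set.mem_Ici, Set.restrict_apply,
      LinearMap.neg_apply]
    constructor
    · intro h; show -f (p : Y) ≤ -a; linarith
    · intro h; have h' : -f (p : Y) ≤ -a := h; linarith

end St19


section St19b
variable {X : Type*} [NormedAddCommGroup X] [NormedSpace ℝ X]

set_option maxHeartbeats 4000000 in
theorem St19.grothendieck_seqCont [CompleteSpace X] {Y : Submodule ℝ (WeakDual ℝ X)}
    (hY : NormClosed X Y) (f : Y →ₗ[ℝ] ℝ) (hf : GrothendieckCond X f) : WStarSeqCont X f := by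
  classical
  intro u y hu
  set y' : StrongDual ℝ X := WeakDual.toStrongDual (y : WeakDual ℝ X) with hy'def
  set d : ℕ → StrongDual ℝ X :=
    fun n => WeakDual.toStrongDual ((u n : WeakDual ℝ X)) - y' with hddef
  -- uniform norm bound on `d`
  obtain ⟨M, hM⟩ := St19.norm_bound_of_compact hu.isCompact_insert_range
  set D : ℝ := 2 * |M| with hDdef
  have hMabs : ∀ z ∈ insert ((y : WeakDual ℝ X)) (Set.range fun n => (u n : WeakDual ℝ X)),
      ‖WeakDual.toStrongDual z‖ ≤ |M| := fun z hz => (hM z hz).trans (le_abs_self M)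
  have hdD : ∀ n, ‖d n‖ ≤ D := by
    intro n
    have h1 : ‖WeakDual.toStrongDual ((u n : WeakDual ℝ X))‖ ≤ |M| :=
      hMabs _ (Set.mem_insert_of_mem _ ⟨n, rfl⟩)
    have h2 : ‖y'‖ ≤ |M| := hMabs _ (Set.mem_insert _ _)
    calc ‖d n‖ ≤ ‖WeakDual.toStrongDual ((u n : WeakDual ℝ X))‖ + ‖y'‖ := norm_sub_le _ _
      _ ≤ D := by rw [hDdef]; linarith
  -- the parameter set
  set P : Set (ℕ → ℝ) := {l | ∀ F : Finset ℕ, ∑ n ∈ F, |l n| ≤ 1} with hPdef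
  have hPsum : ∀ l ∈ P, Summable fun n => |l n| := by
    intro l hl
    exact summable_of_sum_range_le (fun n => abs_nonneg _) fun n => hl (Finset.range n)
  have hPtsum : ∀ l ∈ P, (∑' n, |l n|) ≤ 1 := fun l hl => Summable.tsum_le_of_sum_le (hPsum l hl) hl
  have hsumd : ∀ l ∈ P, Summable fun n => l n • d n := by
    intro l hl
    refine Summable.of_norm_bounded ((hPsum l hl).mul_right D) fun n => ?_
    rw [norm_smul, Real.norm_eq_abs]
    exact mul_le_mul_of_nonneg_left (hdD n) (abs_nonneg _)
  set Q : Set (ℝ × (ℕ → ℝ)) := Set.Icc (-1 : ℝ) 1 ×ˢ P with hQdef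
  set Φ : ℝ × (ℕ → ℝ) → WeakDual ℝ X :=
    fun p => StrongDual.toWeakDual (p.1 • y' + ∑' n, p.2 n • d n) with hΦdef
  set K : Set (WeakDual ℝ X) := Φ '' Q with hKdef
  -- membership of `y` and `u n` in `K`
  have hyQ : ((1 : ℝ), (fun _ => 0 : ℕ → ℝ)) ∈ Q := by
    constructor
    · exact ⟨by norm_num, by norm_num⟩
    · intro F; simp
  have hyK : (y : WeakDual ℝ X) ∈ K := by
    refine ⟨(1, fun _ => 0), hyQ, ?_⟩
    simp only [hΦdef, one_smul, zero_smul, tsum_zero, add_zero]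
    rfl
  have huQ : ∀ n : ℕ, ((1 : ℝ), (fun m => if m = n then (1 : ℝ) else 0)) ∈ Q := by
    intro n
    constructor
    · exact ⟨by norm_num, by norm_num⟩
    · intro F
      calc ∑ m ∈ F, |if m = n then (1 : ℝ) else 0|
          = ∑ m ∈ F, (if m = n then (1 : ℝ) else 0) := by
            refine Finset.sum_congr rfl fun m _ => ?_
            split <;> simp
        _ ≤ 1 := by
            rw [Finset.sum_ite_eq' F n (fun _ => (1 : ℝ))]
            split <;> norm_num
  have huK : ∀ n : ℕ, ((u n : WeakDual ℝ X)) ∈ K := by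
    intro n
    refine ⟨(1, fun m => if m = n then (1 : ℝ) else 0), huQ n, ?_⟩
    have htsum : (∑' m, (if m = n then (1 : ℝ) else 0) • d m) = d n := by
      have : (fun m => (if m = n then (1 : ℝ) else 0) • d m)
          = fun m => if m = n then d n else 0 := by
        funext m
        by_cases h : m = n <;> simp [h]
      rw [this, tsum_ite_eq]
    simp only [hΦdef, one_smul, htsum]
    simp only [hddef, add_sub_cancel]
    rfl
  -- closure of `Q` under absolutely convex combinations, and linearity of `Φ` on them
  have hQcomb : ∀ p ∈ Q, ∀ q ∈ Q, ∀ s t : ℝ, |s| + |t| ≤ 1 → s • p + t • q ∈ Q := by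
    rintro p ⟨hp1, hp2⟩ q ⟨hq1, hq2⟩ s t hst
    constructor
    · have hp1' : |p.1| ≤ 1 := abs_le.2 ⟨hp1.1, hp1.2⟩
      have hq1' : |q.1| ≤ 1 := abs_le.2 ⟨hq1.1, hq1.2⟩
      have : |s * p.1 + t * q.1| ≤ 1 := by
        calc |s * p.1 + t * q.1| ≤ |s| * |p.1| + |t| * |q.1| := by
              refine (abs_add_le _ _).trans ?_
              rw [abs_mul, abs_mul]
            _ ≤ |s| * 1 + |t| * 1 := by
              refine add_le_add ?_ ?_
              · exact mul_le_mul_of_nonneg_left hp1' (abs_nonneg _)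
              · exact mul_le_mul_of_nonneg_left hq1' (abs_nonneg _)
            _ ≤ 1 := by simpa using hst
      exact abs_le.1 this
    · intro F
      calc ∑ m ∈ F, |s * p.2 m + t * q.2 m|
          ≤ ∑ m ∈ F, (|s| * |p.2 m| + |t| * |q.2 m|) := by
            refine Finset.sum_le_sum fun m _ => ?_
            refine (abs_add_le _ _).trans ?_
            rw [abs_mul, abs_mul]
        _ = |s| * ∑ m ∈ F, |p.2 m| + |t| * ∑ m ∈ F, |q.2 m| := by
            rw [Finset.sum_add_distrib, Finset.mul_sum, Finset.mul_sum]
        _ ≤ |s| * 1 + |t| * 1 := by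
            refine add_le_add ?_ ?_
            · exact mul_le_mul_of_nonneg_left (hp2 F) (abs_nonneg _)
            · exact mul_le_mul_of_nonneg_left (hq2 F) (abs_nonneg _)
        _ ≤ 1 := by simpa using hst
  have hΦlin : ∀ p ∈ Q, ∀ q ∈ Q, ∀ s t : ℝ, Φ (s • p + t • q) = s • Φ p + t • Φ q := by
    intro p hp q hq s t
    have hsum1 : Summable fun n => s • (p.2 n • d n) := (hsumd p.2 hp.2).const_smul s
    have hsum2 : Summable fun n => t • (q.2 n • d n) := (hsumd q.2 hq.2).const_smul t
    have htsum : (∑' n, (s • p + t • q).2 n • d n)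
        = s • (∑' n, p.2 n • d n) + t • (∑' n, q.2 n • d n) := by
      have : (fun n => (s • p + t • q).2 n • d n)
          = fun n => s • (p.2 n • d n) + t • (q.2 n • d n) := by
        funext n
        simp only [Prod.smul_snd, Prod.snd_add, Pi.add_apply, Pi.smul_apply, smul_eq_mul,
          add_smul, mul_smul]
      rw [this, Summable.tsum_add hsum1 hsum2, Summable.tsum_const_smul s (hsumd p.2 hp.2),
        Summable.tsum_const_smul t (hsumd q.2 hq.2)]
    simp only [hΦdef, htsum]
    rw [show (s • p + t • q).1 • y' + (s • (∑' n, p.2 n • d n) + t • (∑' n, q.2 n • d n))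
        = s • (p.1 • y' + ∑' n, p.2 n • d n) + t • (q.1 • y' + ∑' n, q.2 n • d n) from by
      simp only [Prod.fst_add, Prod.smul_fst, smul_eq_mul]
      module]
    rw [map_add, map_smul, map_smul]
  -- `K` is convex and balanced
  have hKconv : Convex ℝ K := by
    rintro _ ⟨p, hp, rfl⟩ _ ⟨q, hq, rfl⟩ s t hs ht hst
    refine ⟨s • p + t • q, hQcomb p hp q hq s t ?_, hΦlin p hp q hq s t⟩
    rw [abs_of_nonneg hs, abs_of_nonneg ht]; linarith
  have hKbal : Balanced ℝ K := by
    intro c hc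
    rintro _ ⟨_, ⟨p, hp, rfl⟩, rfl⟩
    refine ⟨c • p, ?_, ?_⟩
    · have := hQcomb p hp p hp c 0 (by simpa using hc)
      simpa using this
    · have := hΦlin p hp p hp c 0
      simp only [zero_smul, add_zero] at this
      rw [this]
  -- `K ⊆ Y`
  have hKY : K ⊆ (Y : Set (WeakDual ℝ X)) := by
    rintro _ ⟨p, hp, rfl⟩
    have hpartial : ∀ N : ℕ, (p.1 • (y : WeakDual ℝ X)
        + ∑ n ∈ Finset.range N, p.2 n • ((u n : WeakDual ℝ X) - (y : WeakDual ℝ X))) ∈ Y := by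
      intro N
      refine Y.add_mem (Y.smul_mem _ y.2) (Submodule.sum_mem _ fun n _ => ?_)
      exact Y.smul_mem _ (Y.sub_mem (u n).2 y.2)
    have hlim : Tendsto (fun N => p.1 • y' + ∑ n ∈ Finset.range N, p.2 n • d n) atTop
        (𝓝 (p.1 • y' + ∑' n, p.2 n • d n)) :=
      ((hsumd p.2 hp.2).hasSum.tendsto_sum_nat).const_add _
    have hmem : (p.1 • y' + ∑' n, p.2 n • d n)
        ∈ (fun y₀ => WeakDual.toStrongDual y₀) '' (Y : Set (WeakDual ℝ X)) := by
      refine hY.mem_of_tendsto hlim (Eventually.of_forall fun N => ?_)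
      exact ⟨_, hpartial N, rfl⟩
    obtain ⟨y₀, hy₀Y, hy₀⟩ := hmem
    have : Φ p = y₀ := by
      simp only [hΦdef, ← hy₀]
      rfl
    rw [this]
    exact hy₀Y
  -- `K` is compact
  have hPcomp : IsCompact P := by
    have hclosed : IsClosed P := by
      have : P = ⋂ F : Finset ℕ, {l : ℕ → ℝ | ∑ n ∈ F, |l n| ≤ 1} := by
        ext l; simp [hPdef, Set.mem_iInter]
      rw [this]
      refine isClosed_iInter fun F => isClosed_le ?_ continuous_const
      exact continuous_finset_sum F fun n _ => (continuous_apply n).abs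
    refine IsCompact.of_isClosed_subset
      (isCompact_univ_pi fun _ : ℕ => (isCompact_Icc : IsCompact (Set.Icc (-1 : ℝ) 1)))
      hclosed ?_
    intro l hl
    refine Set.mem_univ_pi.2 fun n => ?_
    have := hl {n}
    simp only [Finset.sum_singleton] at this
    exact ⟨neg_le_of_abs_le this, le_of_abs_le this⟩
  have hQcomp : IsCompact Q := isCompact_Icc.prod hPcomp
  have hΦcont : ContinuousOn Φ Q := by
    rw [continuousOn_iff_continuous_restrict]
    refine WeakDual.continuous_of_continuous_eval fun x => ?_
    have hdx0 : Tendsto (fun n => d n x) atTop (𝓝 0) := by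
      have h1 : Tendsto (fun n => (u n : WeakDual ℝ X) x) atTop (𝓝 ((y : WeakDual ℝ X) x)) :=
        ((WeakDual.eval_continuous x).tendsto _).comp hu
      have h2 := h1.sub_const ((y : WeakDual ℝ X) x)
      simp only [sub_self] at h2
      exact h2
    have hdxb : ∀ n, |d n x| ≤ D * ‖x‖ := by
      intro n
      calc |d n x| = ‖d n x‖ := rfl
        _ ≤ ‖d n‖ * ‖x‖ := (d n).le_opNorm x
        _ ≤ D * ‖x‖ := mul_le_mul_of_nonneg_right (hdD n) (norm_nonneg x)
    have hsumx : ∀ l ∈ P, Summable fun n => l n * d n x := by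
      intro l hl
      refine Summable.of_norm_bounded ((hPsum l hl).mul_right (D * ‖x‖)) fun n => ?_
      rw [Real.norm_eq_abs, abs_mul]
      exact mul_le_mul_of_nonneg_left (hdxb n) (abs_nonneg _)
    have heq : (fun q : Q => (Q.restrict Φ q) x)
        = fun q : Q => (q : ℝ × (ℕ → ℝ)).1 * y' x
            + ∑' n, (q : ℝ × (ℕ → ℝ)).2 n * d n x := by
      funext q
      have hsq : Summable fun n => (q : ℝ × (ℕ → ℝ)).2 n • d n := hsumd _ q.2.2
      have hmap := (NormedSpace.inclusionInDoubleDual ℝ X x).map_tsum hsq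
      simp only [NormedSpace.dual_def] at hmap
      show ((q : ℝ × (ℕ → ℝ)).1 • y' + ∑' n, (q : ℝ × (ℕ → ℝ)).2 n • d n) x = _
      rw [ContinuousLinearMap.add_apply, ContinuousLinearMap.smul_apply, smul_eq_mul, hmap]
      congr 1
    show Continuous (fun q : Q => (Q.restrict Φ q) x)
    rw [heq]
    have hFcont : ∀ N : ℕ, Continuous fun q : Q =>
        ∑ n ∈ Finset.range N, (q : ℝ × (ℕ → ℝ)).2 n * d n x := by
      intro N
      refine continuous_finset_sum _ fun n _ => ?_
      exact ((continuous_apply n).comp (continuous_snd.comp continuous_subtype_val)).mul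
        continuous_const
    have hunif : TendstoUniformly
        (fun N (q : Q) => ∑ n ∈ Finset.range N, (q : ℝ × (ℕ → ℝ)).2 n * d n x)
        (fun q : Q => ∑' n, (q : ℝ × (ℕ → ℝ)).2 n * d n x) atTop := by
      rw [Metric.tendstoUniformly_iff]
      intro ε hε
      have hεd : ∀ᶠ n in atTop, |d n x| ≤ ε / 2 := by
        have := (Metric.tendsto_atTop.1 hdx0) (ε / 2) (by linarith)
        obtain ⟨N₀, hN₀⟩ := this
        refine eventually_atTop.2 ⟨N₀, fun n hn => ?_⟩
        have := hN₀ n hn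
        rw [Real.dist_eq, sub_zero] at this
        exact this.le
      obtain ⟨N₀, hN₀⟩ := eventually_atTop.1 hεd
      filter_upwards [eventually_ge_atTop N₀] with N hN q
      set l : ℕ → ℝ := (q : ℝ × (ℕ → ℝ)).2 with hldef
      have hl : l ∈ P := q.2.2
      have hsplit := Summable.sum_add_tsum_nat_add (f := fun n => l n * d n x) N (hsumx l hl)
      rw [Real.dist_eq]
      have habs_shift : Summable fun i => |l (i + N) * d (i + N) x| :=
        ((summable_nat_add_iff N).2 (hsumx l hl)).abs
      have habsl_shift : Summable fun i => |l (i + N)| :=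
        (summable_nat_add_iff N).2 (hPsum l hl)
      have habs_shift' : Summable fun i => ‖l (i + N) * d (i + N) x‖ := by
        simpa only [Real.norm_eq_abs] using habs_shift
      have hb1 : |∑' i, l (i + N) * d (i + N) x| ≤ ∑' i, |l (i + N) * d (i + N) x| := by
        simpa only [Real.norm_eq_abs] using norm_tsum_le_tsum_norm habs_shift'
      have hb2 : (∑' i, |l (i + N) * d (i + N) x|) ≤ ∑' i, |l (i + N)| * (ε / 2) := by
        refine Summable.tsum_le_tsum (fun i => ?_) habs_shift (habsl_shift.mul_right _)
        rw [abs_mul]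
        exact mul_le_mul_of_nonneg_left (hN₀ (i + N) (le_trans hN (Nat.le_add_left N i)))
          (abs_nonneg _)
      have hb3 : (∑' i, |l (i + N)| * (ε / 2)) = (∑' i, |l (i + N)|) * (ε / 2) :=
        tsum_mul_right
      have hb4 : (∑' i, |l (i + N)|) ≤ 1 := by
        have hsplitabs := Summable.sum_add_tsum_nat_add (f := fun n => |l n|) N (hPsum l hl)
        have hnn : (0 : ℝ) ≤ ∑ n ∈ Finset.range N, |l n| :=
          Finset.sum_nonneg fun n _ => abs_nonneg _
        have := hPtsum l hl
        linarith
      have hrw : (∑' n, l n * d n x) - ∑ n ∈ Finset.range N, l n * d n x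
          = ∑' i, l (i + N) * d (i + N) x := by linarith
      rw [hrw]
      calc |∑' i, l (i + N) * d (i + N) x| ≤ (∑' i, |l (i + N)|) * (ε / 2) := by
            rw [← hb3]; exact hb1.trans hb2
        _ ≤ 1 * (ε / 2) := by
            refine mul_le_mul_of_nonneg_right hb4 (by linarith)
        _ < ε := by linarith
    have hc2 := hunif.continuous (Eventually.of_forall hFcont).frequently
    exact ((continuous_fst.comp continuous_subtype_val).mul continuous_const).add hc2
  have hKcomp : IsCompact K := hQcomp.image_of_continuousOn hΦcont
  -- conclude via the Grothendieck condition
  have hcont := hf K hKY hKconv hKbal hKcomp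
  have hcw := hcont y hyK
  refine hcw.tendsto.comp ?_
  rw [tendsto_nhdsWithin_iff]
  refine ⟨?_, Eventually.of_forall fun n => huK n⟩
  exact (Topology.IsInducing.subtypeVal.tendsto_nhds_iff).2 hu

end St19b

/-- If `X` has property (E′) — every convex norm-bounded weak-star
sequentially closed subset of `X*` is weak-star closed — then `X` is fully Mackey complete
iff `X` is fully Mazur. -/
theorem statement19 (X : Type*) [NormedAddCommGroup X] [NormedSpace ℝ X] [CompleteSpace X]
    (hE' : ∀ C : Set (WeakDual ℝ X), Convex ℝ C → (∃ M : ℝ, ∀ y ∈ C, dnorm X y ≤ M) →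
      (∀ (u : ℕ → WeakDual ℝ X) (z : WeakDual ℝ X),
        (∀ n, u n ∈ C) → Tendsto u atTop (𝓝 z) → z ∈ C) →
      IsClosed C) :
    FullyMackeyComplete X ↔ FullyMazur X := by
  constructor
  · intro h Y hnorming hclosed f hf
    exact h Y hnorming hclosed f (St19.seqCont_grothendieck hE' f hf)
  · intro h Y hnorming hclosed f hf
    exact h Y hnorming hclosed f (St19.grothendieck_seqCont hclosed f hf)
end
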